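/- Let X₁, …, X_n be integrable real-valued random variables on (Ω, 𝓕, ℙ) with S = X₁ + ⋯ + X_n ≥ 0, and let (w_θ)_{θ ∈ (a,b)} be a family of measurable weight functions [0,∞) → [0,∞) satisfying the MLR property on the support of the distribution of S. Suppose that for each i there is a nondecreasing Borel measurable function g_i : [0,∞) → ℝ such that the conditional expectation of X_i given the σ-algebra generated by S equals g_i(S) almost surely. Let J = {θ ∈ (a,b) : E[|X_i| w_θ(S)] < ∞ for all i and 0 < E[w_θ(S)] < ∞}, and define K_i(θ) = E[X_i w_θ(S)] / E[w_θ(S)] for θ ∈ J. Then each map θ ↦ K_i(θ) is nondecreasing on J, and consequently, for every random variable Θ : Ω → J, the random vector (K₁(Θ), …, K_n(Θ)) is comonotonic. -/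

import Mathlib

open MeasureTheory

/-- The topological support of a Borel measure on ℝ: the set of points all of whose
neighbourhoods have positive measure (the smallest closed set of full measure). -/
def msupport (μ : MeasureTheory.Measure ℝ) : Set ℝ := {x : ℝ | ∀ U ∈ nhds x, μ U ≠ 0}

/-- A finite family of real random variables is comonotonic if all pairwise increments
move in the same direction. -/
def Comonotonic {Ω : Type*} {n : ℕ} (H : Fin n → Ω → ℝ) : Prop :=
  ∀ i j : Fin n, ∀ ω ω' : Ω, 0 ≤ (H i ω - H i ω') * (H j ω - H j ω')

lemma msupport_compl_null (μ : MeasureTheory.Measure ℝ) : μ (msupport μ)ᶜ = 0 := by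
  apply measure_null_of_locally_null
  intro x hx
  simp only [msupport, Set.mem_compl_iff, Set.mem_setOf_eq, not_forall] at hx
  obtain ⟨U, hU, hU0⟩ := hx
  exact ⟨U, mem_nhdsWithin_of_mem_nhds hU, not_not.mp hU0⟩

/-- The key correlation inequality: under MLR on the support and monotonicity of `g`
on `[0,∞)`, weighted means of `g` are ordered. -/
lemma key_ineq (μ : MeasureTheory.Measure ℝ) [IsProbabilityMeasure μ]
    (hIio : μ (Set.Iio 0) = 0)
    (g w₁ w₂ : ℝ → ℝ) (hg : MonotoneOn g (Set.Ici 0))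
    (hmlr : ∀ s₁ ∈ msupport μ, ∀ s₂ ∈ msupport μ, s₁ ≤ s₂ →
      w₂ s₁ * w₁ s₂ ≤ w₂ s₂ * w₁ s₁)
    (hgw₁ : Integrable (fun s => g s * w₁ s) μ) (hgw₂ : Integrable (fun s => g s * w₂ s) μ)
    (hw₁ : Integrable w₁ μ) (hw₂ : Integrable w₂ μ) :
    (∫ s, g s * w₁ s ∂μ) * (∫ s, w₂ s ∂μ) ≤ (∫ s, g s * w₂ s ∂μ) * (∫ s, w₁ s ∂μ) := by
  set A₁ := ∫ s, g s * w₁ s ∂μ with hA₁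
  set A₂ := ∫ s, g s * w₂ s ∂μ with hA₂
  set B₁ := ∫ s, w₁ s ∂μ with hB₁
  set B₂ := ∫ s, w₂ s ∂μ with hB₂
  have hT : ∀ᵐ t ∂μ, t ∈ msupport μ ∩ Set.Ici 0 := by
    have hnull : μ ((msupport μ ∩ Set.Ici 0)ᶜ) = 0 := by
      rw [Set.compl_inter]
      refine measure_union_null (msupport_compl_null μ) ?_
      simpa [Set.compl_Ici] using hIio
    exact mem_ae_iff.mpr hnull
  set φ : ℝ → ℝ := fun s => g s * w₂ s * B₁ - g s * w₁ s * B₂ - w₂ s * A₁ + w₁ s * A₂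
    with hφ
  have hφ0 : ∀ᵐ s ∂μ, 0 ≤ φ s := by
    filter_upwards [hT] with s hs
    obtain ⟨hss, hs0⟩ := hs
    have hinner : φ s = ∫ t, (g s - g t) * (w₂ s * w₁ t - w₁ s * w₂ t) ∂μ := by
      have hrw : (fun t => (g s - g t) * (w₂ s * w₁ t - w₁ s * w₂ t)) =
          fun t => ((g s * w₂ s) * w₁ t - (g s * w₁ s) * w₂ t) -
            (w₂ s * (g t * w₁ t) - w₁ s * (g t * w₂ t)) := by
        funext t; ring
      have h5 : ∫ t, (g s * w₂ s * w₁ t - g s * w₁ s * w₂ t) ∂μ =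
          g s * w₂ s * B₁ - g s * w₁ s * B₂ := by
        rw [integral_sub (hw₁.const_mul _) (hw₂.const_mul _),
          integral_const_mul, integral_const_mul]
      have h6 : ∫ t, (w₂ s * (g t * w₁ t) - w₁ s * (g t * w₂ t)) ∂μ =
          w₂ s * A₁ - w₁ s * A₂ := by
        rw [integral_sub (hgw₁.const_mul _) (hgw₂.const_mul _),
          integral_const_mul, integral_const_mul]
      have I1 : Integrable (fun t => g s * w₂ s * w₁ t - g s * w₁ s * w₂ t) μ :=
        (hw₁.const_mul _).sub (hw₂.const_mul _)
      have I2 : Integrable (fun t => w₂ s * (g t * w₁ t) - w₁ s * (g t * w₂ t)) μ :=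
        (hgw₁.const_mul _).sub (hgw₂.const_mul _)
      rw [hrw, integral_sub I1 I2, h5, h6]
      simp only [hφ]
      ring
    rw [hinner]
    apply integral_nonneg_of_ae
    filter_upwards [hT] with t ht
    obtain ⟨hts, ht0⟩ := ht
    rcases le_total t s with h | h
    · have h1 : g t ≤ g s := hg ht0 hs0 h
      have h2 := hmlr t hts s hss h
      exact mul_nonneg (by linarith) (by linarith)
    · have h1 : g s ≤ g t := hg hs0 ht0 h
      have h2 := hmlr s hss t hts h
      have hkey : (g s - g t) * (w₂ s * w₁ t - w₁ s * w₂ t) =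
          (g t - g s) * (w₂ t * w₁ s - w₁ t * w₂ s) := by ring
      rw [hkey]
      exact mul_nonneg (by linarith) (by linarith)
  have hφint : Integrable φ μ :=
    (((hgw₂.mul_const B₁).sub (hgw₁.mul_const B₂)).sub (hw₂.mul_const A₁)).add
      (hw₁.mul_const A₂)
  have h0 : 0 ≤ ∫ s, φ s ∂μ := integral_nonneg_of_ae hφ0
  have hval : ∫ s, φ s ∂μ = A₂ * B₁ - A₁ * B₂ - B₂ * A₁ + B₁ * A₂ := by
    have J1 : Integrable (fun s => g s * w₂ s * B₁ - g s * w₁ s * B₂) μ :=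
      (hgw₂.mul_const _).sub (hgw₁.mul_const _)
    have J2 : Integrable (fun s => g s * w₂ s * B₁ - g s * w₁ s * B₂ - w₂ s * A₁) μ :=
      J1.sub (hw₂.mul_const _)
    simp only [hφ]
    rw [integral_add J2 (hw₁.mul_const A₂), integral_sub J1 (hw₂.mul_const A₁),
      integral_sub (hgw₂.mul_const B₁) (hgw₁.mul_const B₂),
      integral_mul_const, integral_mul_const, integral_mul_const, integral_mul_const]
  rw [hval] at h0
  linarith

/-- (Proposition 5.2 of the paper.) Under the MLR property of the weight
family on the support of the distribution of `S = Σ Xᵢ ≥ 0`, and assuming the conditional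
expectations `E[Xᵢ | S] = gᵢ(S)` with nondecreasing `gᵢ`, the weighted allocations
`Kᵢ(θ) = E[Xᵢ w_θ(S)] / E[w_θ(S)]` are nondecreasing in `θ` on the set `J` where they are
well defined; consequently `(K₁(Θ), …, K_n(Θ))` is comonotonic for any `Θ` valued in `J`. -/
theorem stmt13 {Ω : Type*} [MeasurableSpace Ω] (P : Measure Ω) [IsProbabilityMeasure P]
    (n : ℕ) (X : Fin n → Ω → ℝ) (hXmeas : ∀ i, Measurable (X i))
    (hXint : ∀ i, Integrable (X i) P)
    (S : Ω → ℝ) (hSdef : S = fun ω => ∑ i, X i ω) (hS0 : ∀ ω, 0 ≤ S ω)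
    (a b : EReal) (hab : a < b)
    (w : ℝ → ℝ → ℝ)
    (hwmeas : ∀ θ : ℝ, (θ : EReal) ∈ Set.Ioo a b → Measurable (w θ))
    (hw0 : ∀ θ : ℝ, (θ : EReal) ∈ Set.Ioo a b → ∀ s, 0 ≤ w θ s)
    (hMLR : ∀ θ₁ θ₂ : ℝ, (θ₁ : EReal) ∈ Set.Ioo a b → (θ₂ : EReal) ∈ Set.Ioo a b → θ₁ ≤ θ₂ →
      ∀ s₁ ∈ msupport (P.map S), ∀ s₂ ∈ msupport (P.map S), s₁ ≤ s₂ →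
        w θ₂ s₁ * w θ₁ s₂ ≤ w θ₂ s₂ * w θ₁ s₁)
    (g : Fin n → ℝ → ℝ)
    (hgmono : ∀ i, MonotoneOn (g i) (Set.Ici 0)) (hgmeas : ∀ i, Measurable (g i))
    (hcond : ∀ i, MeasureTheory.condExp (MeasurableSpace.comap S inferInstance) P (X i)
      =ᵐ[P] fun ω => g i (S ω))
    (J : Set ℝ)
    (hJ : J = {θ : ℝ | (θ : EReal) ∈ Set.Ioo a b ∧
      (∀ i, Integrable (fun ω => |X i ω| * w θ (S ω)) P) ∧
      Integrable (fun ω => w θ (S ω)) P ∧ 0 < ∫ ω, w θ (S ω) ∂P}) :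
    (∀ i : Fin n, ∀ θ₁ ∈ J, ∀ θ₂ ∈ J, θ₁ ≤ θ₂ →
      (∫ ω, X i ω * w θ₁ (S ω) ∂P) / (∫ ω, w θ₁ (S ω) ∂P) ≤
        (∫ ω, X i ω * w θ₂ (S ω) ∂P) / (∫ ω, w θ₂ (S ω) ∂P)) ∧
    (∀ Θ : Ω → ℝ, (∀ ω, Θ ω ∈ J) →
      Comonotonic (fun (i : Fin n) (ω : Ω) =>
        (∫ ω', X i ω' * w (Θ ω) (S ω') ∂P) / (∫ ω', w (Θ ω) (S ω') ∂P))) := by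
  have hSmeas : Measurable S := by
    rw [hSdef]; exact Finset.measurable_sum _ fun i _ => hXmeas i
  set μ := P.map S with hμ
  haveI : IsProbabilityMeasure μ := Measure.isProbabilityMeasure_map hSmeas.aemeasurable
  have hIio : μ (Set.Iio 0) = 0 := by
    rw [hμ, Measure.map_apply hSmeas measurableSet_Iio]
    have : S ⁻¹' Set.Iio 0 = ∅ := by
      ext ω; simp [Set.mem_preimage, not_lt.mpr (hS0 ω)]
    simp [this]
  set m : MeasurableSpace Ω := MeasurableSpace.comap S inferInstance with hmdef
  have hm : m ≤ _ := measurable_iff_comap_le.mp hSmeas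
  haveI : IsFiniteMeasure (P.trim hm) := isFiniteMeasure_trim hm
  haveI : SigmaFinite (P.trim hm) := inferInstance
  have hSm : Measurable[m] S := fun t ht => ⟨t, ht, rfl⟩
  -- main computation for each i and θ ∈ J
  have main : ∀ i : Fin n, ∀ θ ∈ J,
      Integrable (fun s => g i s * w θ s) μ ∧ Integrable (w θ) μ ∧
      (∫ ω, X i ω * w θ (S ω) ∂P = ∫ s, g i s * w θ s ∂μ) ∧
      (∫ ω, w θ (S ω) ∂P = ∫ s, w θ s ∂μ) := by
    intro i θ hθ
    rw [hJ] at hθ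
    obtain ⟨hθab, hθint, hθwint, _⟩ := hθ
    have hwm : Measurable (w θ) := hwmeas θ hθab
    have hw0' : ∀ s, 0 ≤ w θ s := hw0 θ hθab
    have hwSm : Measurable[m] (fun ω => w θ (S ω)) := hwm.comp hSm
    have hXw : Integrable (fun ω => w θ (S ω) * X i ω) P := by
      refine (hθint i).mono' ?_ ?_
      · exact ((hwm.comp hSmeas).mul (hXmeas i)).aestronglyMeasurable
      · filter_upwards with ω
        rw [Real.norm_eq_abs, abs_mul, abs_of_nonneg (hw0' (S ω)), mul_comm]
    have hpull := condExp_mul_of_stronglyMeasurable_left (μ := P) (m := m)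
      hwSm.stronglyMeasurable (g := X i) hXw (hXint i)
    have hcomb : P[(fun ω => w θ (S ω)) * X i|m] =ᵐ[P]
        fun ω => w θ (S ω) * g i (S ω) := by
      refine hpull.trans ?_
      filter_upwards [hcond i] with ω hω
      simp only [Pi.mul_apply]
      rw [hω]
    have hgwS_int : Integrable (fun ω => w θ (S ω) * g i (S ω)) P :=
      (integrable_condExp).congr hcomb
    have hEq1 : ∫ ω, X i ω * w θ (S ω) ∂P = ∫ ω, g i (S ω) * w θ (S ω) ∂P := by
      calc ∫ ω, X i ω * w θ (S ω) ∂P = ∫ ω, ((fun ω => w θ (S ω)) * X i) ω ∂P := by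
            congr 1; funext ω; simp [mul_comm]
        _ = ∫ ω, (P[(fun ω => w θ (S ω)) * X i|m]) ω ∂P := (integral_condExp hm).symm
        _ = ∫ ω, w θ (S ω) * g i (S ω) ∂P := integral_congr_ae hcomb
        _ = ∫ ω, g i (S ω) * w θ (S ω) ∂P := by congr 1; funext ω; ring
    have hmap1 : ∫ ω, g i (S ω) * w θ (S ω) ∂P = ∫ s, g i s * w θ s ∂μ := by
      rw [hμ, integral_map hSmeas.aemeasurable
        (f := fun s => g i s * w θ s) ((hgmeas i).mul hwm).aestronglyMeasurable]
    have hmap2 : ∫ ω, w θ (S ω) ∂P = ∫ s, w θ s ∂μ := by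
      rw [hμ, integral_map hSmeas.aemeasurable hwm.aestronglyMeasurable]
    refine ⟨?_, ?_, hEq1.trans hmap1, hmap2⟩
    · refine (integrable_map_measure ((hgmeas i).mul hwm).aestronglyMeasurable
        hSmeas.aemeasurable).mpr ?_
      exact hgwS_int.congr (by filter_upwards with ω; exact mul_comm _ _)
    · exact (integrable_map_measure hwm.aestronglyMeasurable
        hSmeas.aemeasurable).mpr hθwint
  have part1 : ∀ i : Fin n, ∀ θ₁ ∈ J, ∀ θ₂ ∈ J, θ₁ ≤ θ₂ →
      (∫ ω, X i ω * w θ₁ (S ω) ∂P) / (∫ ω, w θ₁ (S ω) ∂P) ≤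
        (∫ ω, X i ω * w θ₂ (S ω) ∂P) / (∫ ω, w θ₂ (S ω) ∂P) := by
    intro i θ₁ hθ₁ θ₂ hθ₂ hle
    obtain ⟨hgw₁, hw₁, he₁, hf₁⟩ := main i θ₁ hθ₁
    obtain ⟨hgw₂, hw₂, he₂, hf₂⟩ := main i θ₂ hθ₂
    have hB₁ : 0 < ∫ ω, w θ₁ (S ω) ∂P := by
      have := hθ₁; rw [hJ] at this; exact this.2.2.2
    have hB₂ : 0 < ∫ ω, w θ₂ (S ω) ∂P := by
      have := hθ₂; rw [hJ] at this; exact this.2.2.2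
    have hab₁ : (θ₁ : EReal) ∈ Set.Ioo a b := by
      have := hθ₁; rw [hJ] at this; exact this.1
    have hab₂ : (θ₂ : EReal) ∈ Set.Ioo a b := by
      have := hθ₂; rw [hJ] at this; exact this.1
    rw [div_le_div_iff₀ hB₁ hB₂]
    rw [he₁, he₂, hf₁, hf₂]
    exact key_ineq μ hIio (g i) (w θ₁) (w θ₂) (hgmono i)
      (hMLR θ₁ θ₂ hab₁ hab₂ hle) hgw₁ hgw₂ hw₁ hw₂
  refine ⟨part1, ?_⟩
  intro Θ hΘ i j ω ω'
  rcases le_total (Θ ω') (Θ ω) with h | h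
  · have h1 := part1 i (Θ ω') (hΘ ω') (Θ ω) (hΘ ω) h
    have h2 := part1 j (Θ ω') (hΘ ω') (Θ ω) (hΘ ω) h
    exact mul_nonneg (by linarith) (by linarith)
  · have h1 := part1 i (Θ ω) (hΘ ω) (Θ ω') (hΘ ω') h
    have h2 := part1 j (Θ ω) (hΘ ω) (Θ ω') (hΘ ω') h
    nlinarith
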